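/- If G is a nilpotent group, then every generalized torsion element of G is a torsion element. -/

import Mathlib

/-- `x` is a generalized torsion element: some nonempty finite product of
conjugates of `x` equals `1`. -/
def IsGenTorsion {G : Type*} [Group G] (x : G) : Prop :=
  ∃ l : List G, l ≠ [] ∧ (l.map fun g => g⁻¹ * x * g).prod = 1

/-- The generalized order of `x`: the least `k ≥ 1` such that some product of
`k` conjugates of `x` equals `1` (0 if no such `k` exists). -/
noncomputable def genOrder {G : Type*} [Group G] (x : G) : ℕ :=
  sInf {k | 0 < k ∧ ∃ l : List G, l.length = k ∧ (l.map fun g => g⁻¹ * x * g).prod = 1}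

namespace GenTorsionProof

variable {G : Type*} [Group G]

open scoped commutatorElement

def E (x : G) : ℕ → Subgroup G
  | 0 => Subgroup.normalClosure {x}
  | s + 1 => ⁅E x s, (⊤ : Subgroup G)⁆

lemma E_normal (x : G) : ∀ s, (E x s).Normal
  | 0 => Subgroup.normalClosure_normal
  | s + 1 => by
      haveI := E_normal x s
      exact Subgroup.commutator_normal _ _

lemma E_le_lcs (x : G) : ∀ s, E x s ≤ Subgroup.lowerCentralSeries (⊤ : Subgroup G) s
  | 0 => by simp
  | s + 1 => by
      rw [lowerCentralSeries_succ]
      exact Subgroup.commutator_mono (E_le_lcs x s) le_rfl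

lemma E_succ_le (x : G) (s : ℕ) : E x (s + 1) ≤ E x s := by
  haveI := E_normal x s
  exact Subgroup.commutator_le_left _ _

lemma E_le_zero (x : G) : ∀ s, E x s ≤ E x 0
  | 0 => le_rfl
  | s + 1 => (E_succ_le x s).trans (E_le_zero x s)

/-- Level 0 : every element of the normal closure of `x`, raised to the power
`(length l)^c`, lands in `E x 1`. -/
lemma level_zero (x : G) (l : List G)
    (hrel : (l.map fun g => g⁻¹ * x * g).prod = 1)
    (c : ℕ) (hc : Subgroup.lowerCentralSeries (⊤ : Subgroup G) c = ⊥) :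
    ∀ z ∈ E x 0, z ^ (l.length ^ c) ∈ E x 1 := by
  haveI := E_normal x 1
  set N := E x 1 with hN
  set π : G →* G ⧸ N := QuotientGroup.mk' N with hπ
  have hπsurj : Function.Surjective π := QuotientGroup.mk'_surjective N
  set k := l.length with hk
  -- mapped chain
  set F : ℕ → Subgroup (G ⧸ N) := fun s => (E x s).map π with hF
  have hFtop : ∀ s, ⁅F s, (⊤ : Subgroup (G ⧸ N))⁆ = F (s + 1) := by
    intro s
    have h1 : (⊤ : Subgroup (G ⧸ N)) = Subgroup.map π ⊤ :=
      (Subgroup.map_top_of_surjective π hπsurj).symm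
    rw [hF]
    rw [h1, ← Subgroup.map_commutator]
    rfl
  have hF1 : F 1 = ⊥ := by
    simp only [hF, hN, hπ]
    exact QuotientGroup.map_mk'_self _
  have hFB : ∀ s, F s ≤ F 0 := fun s => Subgroup.map_mono (E_le_zero x s)
  haveI hBnormal : (F 0).Normal := (E_normal x 0).map π hπsurj
  -- commutativity inside B := F 0
  have hcomm : ∀ a ∈ F 0, ∀ b ∈ F 0, Commute a b := by
    intro a ha b hb
    have h1 : ⁅F 0, F 0⁆ ≤ ⊥ := by
      rw [← hF1, ← hFtop 0]
      exact Subgroup.commutator_mono le_rfl le_top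
    have := h1 (Subgroup.commutator_mem_commutator ha hb)
    exact commutatorElement_eq_one_iff_commute.mp (Subgroup.mem_bot.mp this)
  -- membership of the conjugate-product
  have hconjmem : ∀ z ∈ F 0, ∀ g : G, (π g)⁻¹ * z * (π g) ∈ F 0 := by
    intro z hz g
    have := hBnormal.conj_mem z hz (π g)⁻¹
    simpa using this
  have hPmem : ∀ (t : List G), ∀ z ∈ F 0,
      (t.map fun g => (π g)⁻¹ * z * (π g)).prod ∈ F 0 := by
    intro t z hz
    apply Subgroup.list_prod_mem
    intro w hw
    rcases List.mem_map.mp hw with ⟨g, -, rfl⟩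
    exact hconjmem z hz g
  -- the map ψ
  set ψ : G ⧸ N → G ⧸ N :=
    fun z => ((l.map fun g => (π g)⁻¹ * z * (π g)).prod)⁻¹ * z ^ k with hψ
  have hψB : ∀ z ∈ F 0, ψ z ∈ F 0 := by
    intro z hz
    exact Subgroup.mul_mem _ (Subgroup.inv_mem _ (hPmem l z hz)) (Subgroup.pow_mem _ hz k)
  -- ψ is multiplicative on B
  have hsplit : ∀ (t : List G), ∀ z ∈ F 0, ∀ w ∈ F 0,
      (t.map fun g => (π g)⁻¹ * (z * w) * (π g)).prod =
        (t.map fun g => (π g)⁻¹ * z * (π g)).prod *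
        (t.map fun g => (π g)⁻¹ * w * (π g)).prod := by
    intro t z hz w hw
    induction t with
    | nil => simp
    | cons g t ih =>
        simp only [List.map_cons, List.prod_cons]
        have e1 : (π g)⁻¹ * (z * w) * (π g)
            = ((π g)⁻¹ * z * (π g)) * ((π g)⁻¹ * w * (π g)) := by group
        rw [e1, ih]
        have c1 : Commute ((π g)⁻¹ * w * (π g))
            ((t.map fun g => (π g)⁻¹ * z * (π g)).prod) :=
          hcomm _ (hconjmem w hw g) _ (hPmem t z hz)
        rw [mul_assoc, mul_assoc, ← mul_assoc ((π g)⁻¹ * w * (π g)), c1.eq]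
        simp [mul_assoc]
  have hψmul : ∀ z ∈ F 0, ∀ w ∈ F 0, ψ (z * w) = ψ z * ψ w := by
    intro z hz w hw
    simp only [hψ]
    rw [hsplit l z hz w hw, (hcomm z hz w hw).mul_pow, mul_inv_rev]
    set Pz := (l.map fun g => (π g)⁻¹ * z * (π g)).prod
    set Pw := (l.map fun g => (π g)⁻¹ * w * (π g)).prod
    have hPz := hPmem l z hz
    have hPw := hPmem l w hw
    have c1 : Commute Pw⁻¹ Pz⁻¹ := ((hcomm _ hPz _ hPw).inv_inv).symm
    have c2 : Commute Pw⁻¹ (z ^ k) := ((hcomm _ (Subgroup.pow_mem _ hz k) _ hPw).inv_right).symm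
    rw [c1.eq, mul_assoc, ← mul_assoc Pw⁻¹, c2.eq]
    simp [mul_assoc]
  have hψone : ψ 1 = 1 := by
    simp only [hψ]
    have : (l.map fun g => (π g)⁻¹ * (1 : G ⧸ N) * (π g)).prod = 1 := by
      apply List.prod_eq_one
      intro w hw
      rcases List.mem_map.mp hw with ⟨g, -, rfl⟩
      group
    rw [this]
    simp
  have hψpow : ∀ z ∈ F 0, ∀ n : ℕ, ψ (z ^ n) = (ψ z) ^ n := by
    intro z hz n
    induction n with
    | zero => simpa using hψone
    | succ n ih =>
        rw [pow_succ, hψmul _ (Subgroup.pow_mem _ hz n) _ hz, ih, pow_succ]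
  -- ψ sends F s to F (s+1)
  have heq : ∀ (t : List G), ∀ z ∈ F 0,
      ((t.map fun g => (π g)⁻¹ * z * (π g)).prod)⁻¹ * z ^ t.length =
        (t.map fun g => ⁅z, (π g)⁻¹⁆).prod := by
    intro t z hz
    induction t with
    | nil => simp
    | cons g t ih =>
        simp only [List.map_cons, List.prod_cons, List.length_cons]
        set c := (π g)⁻¹ * z * (π g) with hcdef
        set Pt := (t.map fun g => (π g)⁻¹ * z * (π g)).prod with hPt
        have hcB : c ∈ F 0 := hconjmem z hz g
        have hPtB : Pt ∈ F 0 := hPmem t z hz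
        have e1 : ⁅z, (π g)⁻¹⁆ = z * c⁻¹ := by
          simp only [hcdef, commutatorElement_def]
          group
        rw [e1, ← ih, mul_inv_rev]
        have c1 : Commute (Pt⁻¹) (c⁻¹) := ((hcomm _ hcB _ hPtB).inv_inv).symm
        have c2 : Commute z c⁻¹ := (hcomm _ hcB _ hz).inv_left.symm
        have c3 : Commute z Pt⁻¹ := (hcomm _ hPtB _ hz).inv_left.symm
        have swap : Pt⁻¹ * c⁻¹ * z = z * c⁻¹ * Pt⁻¹ := by
          calc Pt⁻¹ * c⁻¹ * z = Pt⁻¹ * (c⁻¹ * z) := mul_assoc _ _ _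
            _ = Pt⁻¹ * (z * c⁻¹) := by rw [← c2.eq]
            _ = Pt⁻¹ * z * c⁻¹ := (mul_assoc _ _ _).symm
            _ = z * Pt⁻¹ * c⁻¹ := by rw [← c3.eq]
            _ = z * (Pt⁻¹ * c⁻¹) := mul_assoc _ _ _
            _ = z * (c⁻¹ * Pt⁻¹) := by rw [c1.eq]
            _ = z * c⁻¹ * Pt⁻¹ := (mul_assoc _ _ _).symm
        calc Pt⁻¹ * c⁻¹ * z ^ (t.length + 1)
            = Pt⁻¹ * c⁻¹ * (z * z ^ t.length) := by rw [← pow_succ']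
          _ = (Pt⁻¹ * c⁻¹ * z) * z ^ t.length := (mul_assoc _ _ _).symm
          _ = (z * c⁻¹ * Pt⁻¹) * z ^ t.length := by rw [swap]
          _ = z * c⁻¹ * (Pt⁻¹ * z ^ t.length) := mul_assoc _ _ _
  have hψF : ∀ s, ∀ z, z ∈ F s → ψ z ∈ F (s + 1) := by
    intro s z hz
    have hzB : z ∈ F 0 := hFB s hz
    have : ψ z = (l.map fun g => ⁅z, (π g)⁻¹⁆).prod := heq l z hzB
    rw [this]
    apply Subgroup.list_prod_mem
    intro w hw
    rcases List.mem_map.mp hw with ⟨g, -, rfl⟩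
    rw [← hFtop s]
    exact Subgroup.commutator_mem_commutator hz (Subgroup.mem_top _)
  -- the relation in the quotient
  have hxB : π x ∈ F 0 :=
    Subgroup.mem_map_of_mem π (Subgroup.subset_normalClosure (Set.mem_singleton x))
  have hrelA : (l.map fun g => (π g)⁻¹ * (π x) * (π g)).prod = 1 := by
    have h1 : π ((l.map fun g => g⁻¹ * x * g).prod) = 1 := by rw [hrel]; simp
    rw [map_list_prod, List.map_map] at h1
    have h2 : (π ∘ fun g => g⁻¹ * x * g) = fun g => (π g)⁻¹ * (π x) * (π g) := by
      funext g; simp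
    rwa [h2] at h1
  have hψx : ψ (π x) = (π x) ^ k := by
    simp only [hψ]
    rw [hrelA]
    simp
  -- iterates
  have hPH : ∀ s, ∀ z, z ∈ F 0 → ∀ n : ℕ, ψ^[s] (z ^ n) = (ψ^[s] z) ^ n := by
    intro s
    induction s with
    | zero => intro z _ n; simp
    | succ s ih =>
        intro z hz n
        rw [Function.iterate_succ_apply, Function.iterate_succ_apply,
          hψpow z hz n, ih (ψ z) (hψB z hz) n]
  have hQ : ∀ s, ψ^[s] (π x) = (π x) ^ (k ^ s) := by
    intro s
    induction s with
    | zero => simp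
    | succ s ih =>
        rw [Function.iterate_succ_apply, hψx, hPH s _ hxB k, ih, ← pow_mul, ← pow_succ]
  have hM : ∀ s, ψ^[s] (π x) ∈ F s := by
    intro s
    induction s with
    | zero => exact hxB
    | succ s ih => rw [Function.iterate_succ_apply']; exact hψF s _ ih
  -- conclude for π x
  have hEc : E x c = ⊥ := le_bot_iff.mp (hc ▸ E_le_lcs x c)
  have hxK : (π x) ^ (k ^ c) = 1 := by
    have := hM c
    rw [hQ c] at this
    simp only [hF, hEc, Subgroup.map_bot, Subgroup.mem_bot] at this
    exact this
  -- spread to all of E x 0 via a normal subgroup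
  set K := k ^ c with hK
  set S : Subgroup (G ⧸ N) :=
    { carrier := {a | a ∈ F 0 ∧ a ^ K = 1}
      one_mem' := ⟨Subgroup.one_mem _, one_pow _⟩
      mul_mem' := by
        rintro a b ⟨haB, haK⟩ ⟨hbB, hbK⟩
        exact ⟨Subgroup.mul_mem _ haB hbB, by rw [(hcomm a haB b hbB).mul_pow, haK, hbK, one_mul]⟩
      inv_mem' := by
        rintro a ⟨haB, haK⟩
        exact ⟨Subgroup.inv_mem _ haB, by rw [inv_pow, haK, inv_one]⟩ } with hS
  haveI hSnormal : S.Normal := by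
    constructor
    rintro a ⟨haB, haK⟩ g
    refine ⟨hBnormal.conj_mem a haB g, ?_⟩
    have : (g * a * g⁻¹) ^ K = g * a ^ K * g⁻¹ := by
      rw [show g * a * g⁻¹ = (MulAut.conj g) a from rfl, ← map_pow]
      rfl
    rw [this, haK]
    group
  have hBS : F 0 ≤ S := by
    have h1 : F 0 = Subgroup.normalClosure {π x} := by
      rw [hF]
      show Subgroup.map π (Subgroup.normalClosure {x}) = _
      rw [Subgroup.map_normalClosure _ _ hπsurj, Set.image_singleton]
    rw [h1]
    exact Subgroup.normalClosure_le_normal (by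
      intro a ha
      rcases Set.mem_singleton_iff.mp ha with rfl
      exact ⟨hxB, hxK⟩)
  -- final conclusion
  intro z hz
  have h1 : π z ∈ S := hBS (Subgroup.mem_map_of_mem π hz)
  have h2 : (π z) ^ K = 1 := h1.2
  have h3 : π (z ^ K) = 1 := by rw [map_pow]; exact h2
  have : z ^ K ∈ (QuotientGroup.mk' N).ker := h3
  rwa [QuotientGroup.ker_mk'] at this

/-- Level j+1, assuming level j. -/
lemma level_succ (x : G) (K : ℕ) (j : ℕ)
    (IH : ∀ z ∈ E x j, z ^ K ∈ E x (j + 1)) :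
    ∀ z ∈ E x (j + 1), z ^ K ∈ E x (j + 2) := by
  haveI := E_normal x (j + 2)
  set N := E x (j + 2) with hN
  set π : G →* G ⧸ N := QuotientGroup.mk' N with hπ
  have hπsurj : Function.Surjective π := QuotientGroup.mk'_surjective N
  have htop : (⊤ : Subgroup (G ⧸ N)) = Subgroup.map π ⊤ :=
    (Subgroup.map_top_of_surjective π hπsurj).symm
  have hmap : ∀ s, ⁅Subgroup.map π (E x s), (⊤ : Subgroup (G ⧸ N))⁆
      = Subgroup.map π (E x (s + 1)) := by
    intro s
    rw [htop, ← Subgroup.map_commutator]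
    rfl
  have hbot : Subgroup.map π (E x (j + 2)) = ⊥ := QuotientGroup.map_mk'_self _
  have hone : ∀ a ∈ Subgroup.map π (E x (j + 1)), ∀ m : G ⧸ N, ⁅a, m⁆ = 1 := by
    intro a ha m
    have h1 : ⁅a, m⁆ ∈ ⁅Subgroup.map π (E x (j + 1)), (⊤ : Subgroup (G ⧸ N))⁆ :=
      Subgroup.commutator_mem_commutator ha (Subgroup.mem_top m)
    rw [hmap (j + 1), hbot] at h1
    exact Subgroup.mem_bot.mp h1
  have hPL : ∀ y ∈ Subgroup.map π (E x j), ∀ m : G ⧸ N, ∀ n : ℕ,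
      ⁅y ^ n, m⁆ = ⁅y, m⁆ ^ n := by
    intro y hy m n
    induction n with
    | zero => simp
    | succ n ih =>
        have hyn : ⁅y ^ n, m⁆ ∈ Subgroup.map π (E x (j + 1)) := by
          rw [← hmap j]
          exact Subgroup.commutator_mem_commutator (Subgroup.pow_mem _ hy n)
            (Subgroup.mem_top m)
        have e1 : ⁅y ^ (n + 1), m⁆ = (y * ⁅y ^ n, m⁆ * y⁻¹) * ⁅y, m⁆ := by
          rw [pow_succ']
          rw [commutatorElement_def, commutatorElement_def, commutatorElement_def]
          group
        have e2 : y * ⁅y ^ n, m⁆ * y⁻¹ = ⁅y ^ n, m⁆ * ⁅⁅y ^ n, m⁆⁻¹, y⁆ := by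
          rw [commutatorElement_def]
          group
        have e3 : ⁅⁅y ^ n, m⁆⁻¹, y⁆ = 1 := hone _ (Subgroup.inv_mem _ hyn) y
        rw [e1, e2, e3, mul_one, ih, pow_succ]
  set S : Subgroup (G ⧸ N) :=
    { carrier := {a | a ∈ Subgroup.map π (E x (j + 1)) ∧ a ^ K = 1}
      one_mem' := ⟨Subgroup.one_mem _, one_pow _⟩
      mul_mem' := by
        rintro a b ⟨haB, haK⟩ ⟨hbB, hbK⟩
        have hab : Commute a b := commutatorElement_eq_one_iff_commute.mp (hone a haB b)
        exact ⟨Subgroup.mul_mem _ haB hbB, by rw [hab.mul_pow, haK, hbK, one_mul]⟩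
      inv_mem' := by
        rintro a ⟨haB, haK⟩
        exact ⟨Subgroup.inv_mem _ haB, by rw [inv_pow, haK, inv_one]⟩ } with hS
  have hle : Subgroup.map π (E x (j + 1)) ≤ S := by
    rw [← hmap j]
    apply Subgroup.commutator_le.mpr
    intro y hy m _
    refine ⟨?_, ?_⟩
    · rw [← hmap j]
      exact Subgroup.commutator_mem_commutator hy (Subgroup.mem_top m)
    · rw [← hPL y hy m K]
      rcases Subgroup.mem_map.mp hy with ⟨z, hz, rfl⟩
      rw [← map_pow]
      exact hone _ (Subgroup.mem_map_of_mem π (IH z hz)) m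
  intro z hz
  have h1 : π z ∈ S := hle (Subgroup.mem_map_of_mem π hz)
  have h3 : π (z ^ K) = 1 := by rw [map_pow]; exact h1.2
  have h4 : z ^ K ∈ (QuotientGroup.mk' N).ker := h3
  rwa [QuotientGroup.ker_mk'] at h4

end GenTorsionProof

theorem stmt17 {G : Type*} [Group G] (h : Group.IsNilpotent G) (x : G)
    (hx : IsGenTorsion x) : IsOfFinOrder x := by
  obtain ⟨l, hl, hrel⟩ := hx
  obtain ⟨c, hc⟩ := nilpotent_iff_lowerCentralSeries.mp h
  have hk : 0 < l.length := List.length_pos_iff.mpr hl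
  set K := l.length ^ c with hK
  have key : ∀ j, ∀ z ∈ GenTorsionProof.E x j, z ^ K ∈ GenTorsionProof.E x (j + 1) := by
    intro j
    induction j with
    | zero => exact GenTorsionProof.level_zero x l hrel c hc
    | succ j ih => exact GenTorsionProof.level_succ x K j ih
  have hiter : ∀ j, x ^ K ^ j ∈ GenTorsionProof.E x j := by
    intro j
    induction j with
    | zero =>
        simpa [GenTorsionProof.E] using Subgroup.subset_normalClosure (Set.mem_singleton x)
    | succ j ih =>
        rw [pow_succ K j, pow_mul x (K ^ j) K]
        exact key j _ ih
  have hfin : x ^ K ^ c = 1 := by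
    have h1 := hiter c
    have h2 : GenTorsionProof.E x c = ⊥ :=
      le_bot_iff.mp (hc ▸ GenTorsionProof.E_le_lcs x c)
    rw [h2] at h1
    exact Subgroup.mem_bot.mp h1
  exact isOfFinOrder_iff_pow_eq_one.mpr ⟨K ^ c, pow_pos (pow_pos hk c) c, hfin⟩
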